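/- Equivalence of fixed points and auxiliary edge variables: for a connected weighted graph, there exists θ with ω = B W sin(Bᵀθ) and ‖Bᵀθ‖_∞ ≤ γ < π/2 if and only if there exists ψ ∈ ℝ^m with B W ψ = ω, ‖ψ‖_∞ ≤ sin(γ), and arcsin(ψ) ∈ Im(Bᵀ) (componentwise arcsin). Moreover then Bᵀθ = arcsin(ψ). -/

import Mathlib

open Matrix

lemma sin_eq_of_mul_eq_zero {x y : ℝ} (hx : x ∈ Set.Icc (-(Real.pi/2)) (Real.pi/2))
    (hy : y ∈ Set.Icc (-(Real.pi/2)) (Real.pi/2))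
    (h : (x - y) * (Real.sin x - Real.sin y) = 0) : x = y := by
  rcases lt_trichotomy x y with hlt | heq | hgt
  · have := Real.strictMonoOn_sin hx hy hlt
    nlinarith
  · exact heq
  · have := Real.strictMonoOn_sin hy hx hgt
    nlinarith

/-- Equivalence of Kuramoto fixed points and auxiliary edge variables: there
exists a phase-cohesive solution `θ` of `ω = B W sin(Bᵀθ)` iff there exists
`ψ` with `B W ψ = ω`, `‖ψ‖_∞ ≤ sin γ`, and `arcsin ψ ∈ Im Bᵀ`; moreover then
`Bᵀθ = arcsin ψ`. -/
theorem fixed_point_aux_equivalence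
    (n m : ℕ) (s t : Fin m → Fin n) (a : Fin m → ℝ)
    (B : Matrix (Fin n) (Fin m) ℝ) (ω : Fin n → ℝ) (γ : ℝ)
    (hB : ∀ i e, B i e = if i = s e then 1 else if i = t e then -1 else 0)
    (hst : ∀ e, s e ≠ t e)
    (ha : ∀ e, 0 < a e)
    (hconn : (SimpleGraph.fromRel (fun i j => ∃ e, s e = i ∧ t e = j)).Connected)
    (hω : ∑ i, ω i = 0)
    (hγ : 0 ≤ γ) (hγ2 : γ < Real.pi / 2) :
    ((∃ θ : Fin n → ℝ,
        ω = (B * Matrix.diagonal a).mulVec (fun e => Real.sin (Bᵀ.mulVec θ e)) ∧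
        ∀ e, |Bᵀ.mulVec θ e| ≤ γ) ↔
      (∃ ψ : Fin m → ℝ,
        (B * Matrix.diagonal a).mulVec ψ = ω ∧
        (∀ e, |ψ e| ≤ Real.sin γ) ∧
        ∃ θ' : Fin n → ℝ, (fun e => Real.arcsin (ψ e)) = Bᵀ.mulVec θ')) ∧
    (∀ (θ : Fin n → ℝ) (ψ : Fin m → ℝ),
        ω = (B * Matrix.diagonal a).mulVec (fun e => Real.sin (Bᵀ.mulVec θ e)) →
        (∀ e, |Bᵀ.mulVec θ e| ≤ γ) →
        (B * Matrix.diagonal a).mulVec ψ = ω →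
        (∀ e, |ψ e| ≤ Real.sin γ) →
        (∃ θ' : Fin n → ℝ, (fun e => Real.arcsin (ψ e)) = Bᵀ.mulVec θ') →
        Bᵀ.mulVec θ = fun e => Real.arcsin (ψ e)) := by
  have hγπ : γ ≤ Real.pi / 2 := le_of_lt hγ2
  have hγπ' : -(Real.pi/2) ≤ -γ := neg_le_neg hγπ
  have hsinγ1 : Real.sin γ ≤ 1 := Real.sin_le_one γ
  have hγmem : γ ∈ Set.Icc (-(Real.pi/2)) (Real.pi/2) :=
    ⟨le_trans (by linarith [Real.pi_pos]) hγ, hγπ⟩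
  constructor
  · constructor
    · rintro ⟨θ, hθ1, hθ2⟩
      refine ⟨fun e => Real.sin (Bᵀ.mulVec θ e), hθ1.symm, ?_, θ, ?_⟩
      · intro e
        have h := hθ2 e
        have hx : Bᵀ.mulVec θ e ∈ Set.Icc (-(Real.pi/2)) (Real.pi/2) := by
          constructor <;> [linarith [abs_le.mp h |>.1]; linarith [abs_le.mp h |>.2]]
        rw [abs_le]
        constructor
        · have : Real.sin (-γ) ≤ Real.sin (Bᵀ.mulVec θ e) :=
            Real.strictMonoOn_sin.monotoneOn
              ⟨hγπ', by linarith [Real.pi_pos]⟩ hx (by linarith [abs_le.mp h |>.1])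
          rwa [Real.sin_neg] at this
        · exact Real.strictMonoOn_sin.monotoneOn hx hγmem (abs_le.mp h |>.2)
      · funext e
        have h := hθ2 e
        exact Real.arcsin_sin (by linarith [abs_le.mp h |>.1, hγπ])
          (by linarith [abs_le.mp h |>.2])
    · rintro ⟨ψ, hψ1, hψ2, θ', hθ'⟩
      have hsin : ∀ e, Real.sin (Bᵀ.mulVec θ' e) = ψ e := by
        intro e
        rw [← congrFun hθ' e]
        exact Real.sin_arcsin (by linarith [abs_le.mp (hψ2 e) |>.1])
          (by linarith [abs_le.mp (hψ2 e) |>.2])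
      refine ⟨θ', ?_, ?_⟩
      · rw [show (fun e => Real.sin (Bᵀ.mulVec θ' e)) = ψ from funext hsin]
        exact hψ1.symm
      · intro e
        rw [← congrFun hθ' e, abs_le]
        have hγeq : Real.arcsin (Real.sin γ) = γ := Real.arcsin_sin (by linarith) hγπ
        constructor
        · have := Real.monotone_arcsin (abs_le.mp (hψ2 e) |>.1)
          rwa [← Real.sin_neg, Real.arcsin_sin (by linarith) (by linarith)] at this
        · have := Real.monotone_arcsin (abs_le.mp (hψ2 e) |>.2)
          rwa [hγeq] at this
  · rintro θ ψ h1 h2 h3 h4 ⟨θ', hθ'⟩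
    set η := Bᵀ.mulVec θ with hη
    have hsin : ∀ e, Real.sin (Bᵀ.mulVec θ' e) = ψ e := by
      intro e
      rw [← congrFun hθ' e]
      exact Real.sin_arcsin (by linarith [abs_le.mp (h4 e) |>.1])
        (by linarith [abs_le.mp (h4 e) |>.2])
    have hξmem : ∀ e, Bᵀ.mulVec θ' e ∈ Set.Icc (-(Real.pi/2)) (Real.pi/2) := by
      intro e
      rw [← congrFun hθ' e]
      exact ⟨Real.neg_pi_div_two_le_arcsin _, Real.arcsin_le_pi_div_two _⟩
    have hηmem : ∀ e, η e ∈ Set.Icc (-(Real.pi/2)) (Real.pi/2) := by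
      intro e
      have h := abs_le.mp (h2 e)
      exact ⟨by linarith [h.1], by linarith [h.2]⟩
    -- B W (sin η - ψ) = 0
    have hzero : (B * Matrix.diagonal a).mulVec
        ((fun e => Real.sin (η e)) - ψ) = 0 := by
      rw [Matrix.mulVec_sub, ← h1, h3, sub_self]
    -- dot with θ - θ'
    have hdot : (θ - θ') ⬝ᵥ (B * Matrix.diagonal a).mulVec
        ((fun e => Real.sin (η e)) - ψ) = 0 := by rw [hzero, dotProduct_zero]
    rw [Matrix.dotProduct_mulVec] at hdot
    have hvec : (θ - θ') ᵥ* (B * Matrix.diagonal a)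
        = fun e => (η e - Bᵀ.mulVec θ' e) * a e := by
      funext e
      rw [← Matrix.vecMul_vecMul]
      have : (θ - θ') ᵥ* B = Bᵀ.mulVec (θ - θ') := (Matrix.mulVec_transpose B _).symm
      rw [this, Matrix.mulVec_sub]
      simp [Matrix.vecMul_diagonal]
      exact Or.inl rfl
    rw [hvec] at hdot
    have hsum : ∑ e, (η e - Bᵀ.mulVec θ' e) * a e *
        (Real.sin (η e) - Real.sin (Bᵀ.mulVec θ' e)) = 0 := by
      rw [← hdot]
      simp only [dotProduct, Pi.sub_apply]
      exact Finset.sum_congr rfl fun e _ => by rw [hsin e]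
    have hnonneg : ∀ e ∈ Finset.univ, 0 ≤ (η e - Bᵀ.mulVec θ' e) * a e *
        (Real.sin (η e) - Real.sin (Bᵀ.mulVec θ' e)) := by
      intro e _
      rcases le_or_gt (Bᵀ.mulVec θ' e) (η e) with hle | hlt
      · have := Real.strictMonoOn_sin.monotoneOn (hξmem e) (hηmem e) hle
        have hp : 0 ≤ (η e - Bᵀ.mulVec θ' e) * (Real.sin (η e) - Real.sin (Bᵀ.mulVec θ' e)) :=
          mul_nonneg (by linarith) (by linarith)
        nlinarith [mul_nonneg (ha e).le hp]
      · have := Real.strictMonoOn_sin (hηmem e) (hξmem e) hlt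
        have hp : 0 ≤ (η e - Bᵀ.mulVec θ' e) * (Real.sin (η e) - Real.sin (Bᵀ.mulVec θ' e)) :=
          by nlinarith []
        nlinarith [mul_nonneg (ha e).le hp]
    have hall := (Finset.sum_eq_zero_iff_of_nonneg hnonneg).mp hsum
    funext e
    have hc : Real.arcsin (ψ e) = Bᵀ.mulVec θ' e := congrFun hθ' e
    rw [hc]
    have he := hall e (Finset.mem_univ e)
    have hor : η e - Bᵀ.mulVec θ' e = 0 ∨
        Real.sin (η e) - Real.sin (Bᵀ.mulVec θ' e) = 0 := by
      rcases mul_eq_zero.mp he with h | h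
      · rcases mul_eq_zero.mp h with h | h
        · exact Or.inl h
        · exact absurd h (ha e).ne'
      · exact Or.inr h
    have hprod : (η e - Bᵀ.mulVec θ' e) *
        (Real.sin (η e) - Real.sin (Bᵀ.mulVec θ' e)) = 0 := by
      rcases hor with h | h <;> rw [h] <;> ring
    exact sin_eq_of_mul_eq_zero (hηmem e) (hξmem e) hprod
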